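/- For any bijection E : Σ → {1,...,n} and its reversal E^r (defined by E^r(t) = n + 1 − E(t)), and any token t, the sum A_E(E(t)) − A_E(E(t)−1) + A_{E^r}(E^r(t)) − A_{E^r}(E^r(t)−1) equals 2 P_T(t). -/

import Mathlib

/-- The auxiliary function `A_E(i) = max(2 ∑_{t : E(t) ≤ i} P_T(t) − 1, 0)` of the
γ-reweight, where the bijection `E : S ≃ Fin n` is viewed as 1-indexed via `(E t : ℕ) + 1`. -/
noncomputable def gammaA {S : Type*} [Fintype S]
    (P : S → ℝ) (E : S ≃ Fin (Fintype.card S)) (i : ℕ) : ℝ :=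
  max (2 * (∑ t', if (E t' : ℕ) + 1 ≤ i then P t' else 0) - 1) 0

private lemma max_sub_max_neg (x : ℝ) : max x 0 - max (-x) 0 = x := by
  rcases le_total x 0 with h | h
  · rw [max_eq_right h, max_eq_left (by linarith)]; ring
  · rw [max_eq_left h, max_eq_right (by linarith)]; ring

/-- For any bijection `E` and its reversal `E^r` (with `E^r(t) = n + 1 − E(t)` in 1-indexed
terms), the γ-reweighted masses of a token `t` under `E` and `E^r` sum to `2 P_T(t)`. -/
theorem gamma_reweight_reversal_sum
    {S : Type*} [Fintype S]
    (P : S → ℝ) (hP : ∀ t, 0 ≤ P t) (hPsum : ∑ t, P t = 1)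
    (E : S ≃ Fin (Fintype.card S)) (t : S) :
    (gammaA P E ((E t : ℕ) + 1) - gammaA P E (E t : ℕ)) +
      (gammaA P (E.trans Fin.revPerm) ((((E.trans Fin.revPerm) t : ℕ)) + 1) -
        gammaA P (E.trans Fin.revPerm) ((E.trans Fin.revPerm) t : ℕ))
      = 2 * P t := by
  classical
  obtain ⟨n, hndef⟩ : ∃ n, Fintype.card S = n := ⟨_, rfl⟩
  set k := (E t : ℕ) with hkdef
  have hk : k < n := hndef ▸ (E t).isLt
  set F : ℕ → ℝ := fun i => ∑ t', if (E t' : ℕ) + 1 ≤ i then P t' else 0 with hF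
  -- difference of consecutive partial sums
  have hdiff : F (k + 1) - F k = P t := by
    rw [hF]
    simp only
    rw [← Finset.sum_sub_distrib]
    have hpt : ∀ t', ((if (E t' : ℕ) + 1 ≤ k + 1 then P t' else 0) -
        (if (E t' : ℕ) + 1 ≤ k then P t' else 0)) = if t' = t then P t' else 0 := by
      intro t'
      by_cases h : t' = t
      · subst h
        simp [hkdef]
      · have hne : (E t' : ℕ) ≠ k := by
          intro hh
          exact h (E.injective (Fin.ext hh))
        by_cases h2 : (E t' : ℕ) + 1 ≤ k
        · have : (E t' : ℕ) + 1 ≤ k + 1 := by omega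
          simp [h2, this, h]
        · have : ¬ ((E t' : ℕ) + 1 ≤ k + 1) := by omega
          simp [h2, this, h]
      
    rw [Finset.sum_congr rfl fun t' _ => hpt t']
    simp
  -- reversal identity
  have hval : ∀ t', ((E.trans Fin.revPerm) t' : ℕ) = n - 1 - (E t' : ℕ) := by
    intro t'
    simp only [Equiv.trans_apply, Fin.revPerm_apply, Fin.val_rev, hndef]
    omega
  have hrev : ∀ i, i ≤ n →
      (∑ t', if ((E.trans Fin.revPerm) t' : ℕ) + 1 ≤ i then P t' else 0) = 1 - F (n - i) := by
    intro i hi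
    have : ∀ t', (if ((E.trans Fin.revPerm) t' : ℕ) + 1 ≤ i then P t' else 0) =
        P t' - (if (E t' : ℕ) + 1 ≤ n - i then P t' else 0) := by
      intro t'
      have he : (E t' : ℕ) < n := hndef ▸ (E t').isLt
      rw [hval t']
      by_cases h : n - 1 - (E t' : ℕ) + 1 ≤ i
      · have : ¬ ((E t' : ℕ) + 1 ≤ n - i) := by omega
        simp [h, this]
      · have : (E t' : ℕ) + 1 ≤ n - i := by omega
        simp [h, this]
    rw [Finset.sum_congr rfl fun t' _ => this t', Finset.sum_sub_distrib, hPsum, hF]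
  -- unfold gammaA
  have e1 : gammaA P E (k + 1) = max (2 * F (k + 1) - 1) 0 := rfl
  have e2 : gammaA P E k = max (2 * F k - 1) 0 := rfl
  have hrt : ((E.trans Fin.revPerm) t : ℕ) = n - 1 - k := hval t
  have e3 : gammaA P (E.trans Fin.revPerm) (((E.trans Fin.revPerm) t : ℕ) + 1)
      = max (-(2 * F k - 1)) 0 := by
    unfold gammaA
    rw [hrt, hrev (n - 1 - k + 1) (by omega)]
    have h5 : n - (n - 1 - k + 1) = k := by omega
    rw [h5]
    congr 1
    ring
  have e4 : gammaA P (E.trans Fin.revPerm) ((E.trans Fin.revPerm) t : ℕ)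
      = max (-(2 * F (k + 1) - 1)) 0 := by
    unfold gammaA
    rw [hrt, hrev (n - 1 - k) (by omega)]
    have h5 : n - (n - 1 - k) = k + 1 := by omega
    rw [h5]
    congr 1
    ring
  rw [e1, e2, e3, e4]
  have h1 := max_sub_max_neg (2 * F (k + 1) - 1)
  have h2 := max_sub_max_neg (2 * F k - 1)
  linarith
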